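/- Given an element a of a Hopf algebra A, the map ρ_a(x,y) = (x - ε(x)1)·a·(y - ε(y)1) is a Fox pairing. Moreover, if s(a) = -a, where s is the antipode, then ρ_a is antisymmetric (its transpose equals its negative). -/

import Mathlib

open scoped TensorProduct
open Coalgebra HopfAlgebra TensorProduct

suppress_compilation

namespace FoxAux

variable {K A : Type*} [CommRing K] [Ring A] [HopfAlgebra K A]

lemma repr_smul_right (x : A) {ι : Type*} (r : Coalgebra.Repr K x ι) :
    ∑ i ∈ r.index, Coalgebra.counit (R := K) (r.left i) • r.right i = x := by
  have h := Coalgebra.sum_counit_tmul_eq (R := K) r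
  calc ∑ i ∈ r.index, Coalgebra.counit (R := K) (r.left i) • r.right i
      = TensorProduct.lid K A
        (∑ i ∈ r.index, Coalgebra.counit (R := K) (r.left i) ⊗ₜ[K] r.right i) := by
        rw [map_sum]; simp
    _ = x := by rw [h]; simp

lemma repr_smul_left (x : A) {ι : Type*} (r : Coalgebra.Repr K x ι) :
    ∑ i ∈ r.index, Coalgebra.counit (R := K) (r.right i) • r.left i = x := by
  have h := Coalgebra.sum_tmul_counit_eq (R := K) r
  calc ∑ i ∈ r.index, Coalgebra.counit (R := K) (r.right i) • r.left i
      = TensorProduct.rid K A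
        (∑ i ∈ r.index, r.left i ⊗ₜ[K] Coalgebra.counit (R := K) (r.right i)) := by
        rw [map_sum]; simp
    _ = x := by rw [h]; simp

/-- comultiplication of the tensor square, as a plain linear map. -/
def comul₂ : A ⊗[K] A →ₗ[K] (A ⊗[K] A) ⊗[K] (A ⊗[K] A) :=
  (TensorProduct.tensorTensorTensorComm K A A A A).toLinearMap ∘ₗ
    TensorProduct.map Coalgebra.comul Coalgebra.comul

/-- convolution product on `Hom(A ⊗ A, A)`. -/
def conv2 (F G : A ⊗[K] A →ₗ[K] A) : A ⊗[K] A →ₗ[K] A :=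
  LinearMap.mul' K A ∘ₗ TensorProduct.map F G ∘ₗ comul₂

/-- convolution unit on `Hom(A ⊗ A, A)`. -/
def u2 : A ⊗[K] A →ₗ[K] A :=
  Algebra.linearMap K A ∘ₗ LinearMap.mul' K K ∘ₗ
    TensorProduct.map (Coalgebra.counit (R := K)) (Coalgebra.counit (R := K))

lemma u2_tmul (x y : A) :
    u2 (x ⊗ₜ[K] y) = (Coalgebra.counit (R := K) x * Coalgebra.counit (R := K) y) • (1 : A) := by
  simp [u2, Algebra.algebraMap_eq_smul_one]

lemma conv2_tmul (F G : A ⊗[K] A →ₗ[K] A) (x y : A)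
    {ι κ : Type*} (rx : Coalgebra.Repr K x ι) (ry : Coalgebra.Repr K y κ) :
    conv2 F G (x ⊗ₜ[K] y) =
      ∑ i ∈ rx.index, ∑ j ∈ ry.index,
        F (rx.left i ⊗ₜ[K] ry.left j) * G (rx.right i ⊗ₜ[K] ry.right j) := by
  simp only [conv2, comul₂, LinearMap.comp_apply, TensorProduct.map_tmul,
    LinearEquiv.coe_coe]
  rw [← rx.eq, ← ry.eq, TensorProduct.sum_tmul]
  simp only [TensorProduct.tmul_sum, map_sum, TensorProduct.map_tmul,
    TensorProduct.tensorTensorTensorComm_tmul, LinearMap.mul'_apply]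

lemma conv2_u2_left (G : A ⊗[K] A →ₗ[K] A) : conv2 u2 G = G := by
  refine TensorProduct.ext' fun x y => ?_
  rw [conv2_tmul u2 G x y (ℛ K x) (ℛ K y)]
  calc ∑ i ∈ (ℛ K x).index, ∑ j ∈ (ℛ K y).index,
        u2 ((ℛ K x).left i ⊗ₜ[K] (ℛ K y).left j) *
          G ((ℛ K x).right i ⊗ₜ[K] (ℛ K y).right j)
      = ∑ i ∈ (ℛ K x).index, ∑ j ∈ (ℛ K y).index,
        (Coalgebra.counit (R := K) ((ℛ K x).left i) *
          Coalgebra.counit (R := K) ((ℛ K y).left j)) •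
          G ((ℛ K x).right i ⊗ₜ[K] (ℛ K y).right j) := by
        refine Finset.sum_congr rfl fun i _ => Finset.sum_congr rfl fun j _ => ?_
        rw [u2_tmul, smul_mul_assoc, one_mul]
    _ = G (x ⊗ₜ[K] y) := by
        conv_rhs => rw [← repr_smul_right x (ℛ K x), ← repr_smul_right y (ℛ K y)]
        rw [TensorProduct.sum_tmul, map_sum]
        refine Finset.sum_congr rfl fun i _ => ?_
        rw [TensorProduct.tmul_sum, map_sum]
        refine Finset.sum_congr rfl fun j _ => ?_
        rw [← TensorProduct.smul_tmul', TensorProduct.tmul_smul, map_smul, map_smul, smul_smul]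

lemma conv2_u2_right (F : A ⊗[K] A →ₗ[K] A) : conv2 F u2 = F := by
  refine TensorProduct.ext' fun x y => ?_
  rw [conv2_tmul F u2 x y (ℛ K x) (ℛ K y)]
  calc ∑ i ∈ (ℛ K x).index, ∑ j ∈ (ℛ K y).index,
        F ((ℛ K x).left i ⊗ₜ[K] (ℛ K y).left j) *
          u2 ((ℛ K x).right i ⊗ₜ[K] (ℛ K y).right j)
      = ∑ i ∈ (ℛ K x).index, ∑ j ∈ (ℛ K y).index,
        (Coalgebra.counit (R := K) ((ℛ K x).right i) *
          Coalgebra.counit (R := K) ((ℛ K y).right j)) •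
          F ((ℛ K x).left i ⊗ₜ[K] (ℛ K y).left j) := by
        refine Finset.sum_congr rfl fun i _ => Finset.sum_congr rfl fun j _ => ?_
        rw [u2_tmul, mul_smul_comm, mul_one]
    _ = F (x ⊗ₜ[K] y) := by
        conv_rhs => rw [← repr_smul_left x (ℛ K x), ← repr_smul_left y (ℛ K y)]
        rw [TensorProduct.sum_tmul, map_sum]
        refine Finset.sum_congr rfl fun i _ => ?_
        rw [TensorProduct.tmul_sum, map_sum]
        refine Finset.sum_congr rfl fun j _ => ?_
        rw [← TensorProduct.smul_tmul', TensorProduct.tmul_smul, map_smul, map_smul, smul_smul]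


/-- A representation of `comul (x * y)` built from representations of `x` and `y`. -/
def mulRepr (x y : A) {ι κ : Type*} (rx : Coalgebra.Repr K x ι) (ry : Coalgebra.Repr K y κ) :
    Coalgebra.Repr K (x * y) (ι × κ) where
  index := rx.index ×ˢ ry.index
  left p := rx.left p.1 * ry.left p.2
  right p := rx.right p.1 * ry.right p.2
  eq := by
    rw [Bialgebra.comul_mul, ← rx.eq, ← ry.eq, Finset.sum_mul_sum]
    rw [Finset.sum_product]
    simp [Algebra.TensorProduct.tmul_mul_tmul]

lemma conv2_antipode_mul :
    conv2 ((antipode (R := K) (A := A)) ∘ₗ LinearMap.mul' K A) (LinearMap.mul' K A) = u2 := by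
  refine TensorProduct.ext' fun x y => ?_
  rw [conv2_tmul _ _ x y (ℛ K x) (ℛ K y), u2_tmul]
  have h := HopfAlgebra.sum_antipode_mul_eq_smul (R := K) (mulRepr x y (ℛ K x) (ℛ K y))
  simp only [mulRepr, Finset.sum_product] at h
  rw [← Bialgebra.counit_mul, ← h]
  simp

lemma conv2_mul_antipodeFlip :
    conv2 (LinearMap.mul' K A)
      (LinearMap.mul' K A ∘ₗ TensorProduct.map (antipode (R := K)) (antipode (R := K)) ∘ₗ
        (TensorProduct.comm K A A).toLinearMap) = u2 := by
  refine TensorProduct.ext' fun x y => ?_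
  rw [conv2_tmul _ _ x y (ℛ K x) (ℛ K y), u2_tmul]
  have hy := HopfAlgebra.sum_mul_antipode_eq_smul (R := K) (ℛ K y)
  have hx := HopfAlgebra.sum_mul_antipode_eq_smul (R := K) (ℛ K x)
  calc ∑ i ∈ (ℛ K x).index, ∑ j ∈ (ℛ K y).index,
        LinearMap.mul' K A ((ℛ K x).left i ⊗ₜ[K] (ℛ K y).left j) *
          (LinearMap.mul' K A ∘ₗ TensorProduct.map (antipode (R := K)) (antipode (R := K)) ∘ₗ
            (TensorProduct.comm K A A).toLinearMap)
            ((ℛ K x).right i ⊗ₜ[K] (ℛ K y).right j)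
      = ∑ i ∈ (ℛ K x).index,
          (ℛ K x).left i *
            ((∑ j ∈ (ℛ K y).index, (ℛ K y).left j * antipode (R := K) ((ℛ K y).right j)) *
              antipode (R := K) ((ℛ K x).right i)) := by
        refine Finset.sum_congr rfl fun i _ => ?_
        rw [Finset.sum_mul, Finset.mul_sum]
        refine Finset.sum_congr rfl fun j _ => ?_
        simp only [LinearMap.comp_apply, LinearEquiv.coe_coe, TensorProduct.comm_tmul,
          TensorProduct.map_tmul, LinearMap.mul'_apply]
        noncomm_ring
    _ = (Coalgebra.counit (R := K) x * Coalgebra.counit (R := K) y) • 1 := by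
        rw [hy]
        have : ∀ i ∈ (ℛ K x).index,
            (ℛ K x).left i * ((Coalgebra.counit (R := K) y • (1 : A)) *
              antipode (R := K) ((ℛ K x).right i)) =
            Coalgebra.counit (R := K) y •
              ((ℛ K x).left i * antipode (R := K) ((ℛ K x).right i)) := by
          intro i _
          rw [smul_mul_assoc, one_mul, mul_smul_comm]
        rw [Finset.sum_congr rfl this, ← Finset.smul_sum, hx, smul_smul, mul_comm]


lemma sum4_swap {M : Type*} [AddCommMonoid M] {ι₁ ι₂ : Type*} {κ₁ : ι₁ → Type*}
    {κ₂ : ι₂ → Type*}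
    (s : Finset ι₁) (t : Finset ι₂) (f : ∀ i, Finset (κ₁ i)) (g : ∀ j, Finset (κ₂ j))
    (h : ∀ i, κ₁ i → ∀ j, κ₂ j → M) :
    ∑ i ∈ s, ∑ k ∈ f i, ∑ j ∈ t, ∑ l ∈ g j, h i k j l =
    ∑ j ∈ t, ∑ l ∈ g j, ∑ i ∈ s, ∑ k ∈ f i, h i k j l := by
  calc ∑ i ∈ s, ∑ k ∈ f i, ∑ j ∈ t, ∑ l ∈ g j, h i k j l
      = ∑ i ∈ s, ∑ j ∈ t, ∑ k ∈ f i, ∑ l ∈ g j, h i k j l :=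
        Finset.sum_congr rfl fun i _ => Finset.sum_comm
    _ = ∑ j ∈ t, ∑ i ∈ s, ∑ k ∈ f i, ∑ l ∈ g j, h i k j l := Finset.sum_comm
    _ = ∑ j ∈ t, ∑ i ∈ s, ∑ l ∈ g j, ∑ k ∈ f i, h i k j l :=
        Finset.sum_congr rfl fun j _ => Finset.sum_congr rfl fun i _ => Finset.sum_comm
    _ = ∑ j ∈ t, ∑ l ∈ g j, ∑ i ∈ s, ∑ k ∈ f i, h i k j l :=
        Finset.sum_congr rfl fun j _ => Finset.sum_comm

lemma conv2_assoc (F G H : A ⊗[K] A →ₗ[K] A) :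
    conv2 (conv2 F G) H = conv2 F (conv2 G H) := by
  refine TensorProduct.ext' fun x y => ?_
  set rx := ℛ K x with hrx
  set ry := ℛ K y with hry
  set a1x : ∀ i : rx.ι, Coalgebra.Repr K (rx.left i) (A × A) := fun i => ℛ K (rx.left i) with ha1x
  set a2x : ∀ i : rx.ι, Coalgebra.Repr K (rx.right i) (A × A) := fun i => ℛ K (rx.right i) with ha2x
  set a1y : ∀ j : ry.ι, Coalgebra.Repr K (ry.left j) (A × A) := fun j => ℛ K (ry.left j) with ha1y
  set a2y : ∀ j : ry.ι, Coalgebra.Repr K (ry.right j) (A × A) := fun j => ℛ K (ry.right j) with ha2y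
  -- the big auxiliary linear map
  set bigL : (A ⊗[K] (A ⊗[K] A)) ⊗[K] (A ⊗[K] (A ⊗[K] A)) →ₗ[K] A :=
    LinearMap.mul' K A ∘ₗ
      TensorProduct.map F (LinearMap.mul' K A ∘ₗ TensorProduct.map G H) ∘ₗ
      (LinearMap.lTensor (A ⊗[K] A)
        (TensorProduct.tensorTensorTensorComm K A A A A).toLinearMap) ∘ₗ
      (TensorProduct.tensorTensorTensorComm K A (A ⊗[K] A) A (A ⊗[K] A)).toLinearMap
    with hbigL
  have bigL_tmul : ∀ a b c d e f : A,
      bigL ((a ⊗ₜ[K] (b ⊗ₜ[K] c)) ⊗ₜ[K] (d ⊗ₜ[K] (e ⊗ₜ[K] f))) =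
        F (a ⊗ₜ[K] d) * (G (b ⊗ₜ[K] e) * H (c ⊗ₜ[K] f)) := by
    intro a b c d e f
    simp [hbigL]
  have hx := Coalgebra.sum_tmul_tmul_eq (R := K) rx a1x a2x
  have hy := Coalgebra.sum_tmul_tmul_eq (R := K) ry a1y a2y
  have key := congrArg bigL
    (by rw [hx, hy] :
      (∑ i ∈ rx.index, ∑ k ∈ (a1x i).index,
          (a1x i).left k ⊗ₜ[K] ((a1x i).right k ⊗ₜ[K] rx.right i)) ⊗ₜ[K]
        (∑ j ∈ ry.index, ∑ l ∈ (a1y j).index,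
          (a1y j).left l ⊗ₜ[K] ((a1y j).right l ⊗ₜ[K] ry.right j)) =
      (∑ i ∈ rx.index, ∑ k ∈ (a2x i).index,
          rx.left i ⊗ₜ[K] ((a2x i).left k ⊗ₜ[K] (a2x i).right k)) ⊗ₜ[K]
        (∑ j ∈ ry.index, ∑ l ∈ (a2y j).index,
          ry.left j ⊗ₜ[K] ((a2y j).left l ⊗ₜ[K] (a2y j).right l)))
  simp only [TensorProduct.sum_tmul, TensorProduct.tmul_sum, map_sum, bigL_tmul] at key
  -- key : ∑ i ∑ k ∑ j ∑ l F(x11 ⊗ y11) * (G(x12 ⊗ y12) * H(x2 ⊗ y2))  (left reprs)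
  --     = ∑ i ∑ k ∑ j ∑ l F(x1 ⊗ y1) * (G(x21 ⊗ y21) * H(x22 ⊗ y22)) (right reprs)
  calc conv2 (conv2 F G) H (x ⊗ₜ[K] y)
      = ∑ i ∈ rx.index, ∑ j ∈ ry.index, ∑ k ∈ (a1x i).index, ∑ l ∈ (a1y j).index,
          F ((a1x i).left k ⊗ₜ[K] (a1y j).left l) *
            (G ((a1x i).right k ⊗ₜ[K] (a1y j).right l) *
              H (rx.right i ⊗ₜ[K] ry.right j)) := by
        rw [conv2_tmul _ _ x y rx ry]
        refine Finset.sum_congr rfl fun i _ => Finset.sum_congr rfl fun j _ => ?_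
        rw [conv2_tmul F G _ _ (a1x i) (a1y j), Finset.sum_mul]
        refine Finset.sum_congr rfl fun k _ => ?_
        rw [Finset.sum_mul]
        exact Finset.sum_congr rfl fun l _ => (mul_assoc _ _ _)
    _ = ∑ i ∈ rx.index, ∑ k ∈ (a1x i).index, ∑ j ∈ ry.index, ∑ l ∈ (a1y j).index,
          F ((a1x i).left k ⊗ₜ[K] (a1y j).left l) *
            (G ((a1x i).right k ⊗ₜ[K] (a1y j).right l) *
              H (rx.right i ⊗ₜ[K] ry.right j)) :=
        Finset.sum_congr rfl fun i _ => Finset.sum_comm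
    _ = ∑ j ∈ ry.index, ∑ l ∈ (a1y j).index, ∑ i ∈ rx.index, ∑ k ∈ (a1x i).index,
          F ((a1x i).left k ⊗ₜ[K] (a1y j).left l) *
            (G ((a1x i).right k ⊗ₜ[K] (a1y j).right l) *
              H (rx.right i ⊗ₜ[K] ry.right j)) := sum4_swap _ _ _ _ _
    _ = ∑ j ∈ ry.index, ∑ l ∈ (a2y j).index, ∑ i ∈ rx.index, ∑ k ∈ (a2x i).index,
          F (rx.left i ⊗ₜ[K] ry.left j) *
            (G ((a2x i).left k ⊗ₜ[K] (a2y j).left l) *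
              H ((a2x i).right k ⊗ₜ[K] (a2y j).right l)) := key
    _ = ∑ i ∈ rx.index, ∑ k ∈ (a2x i).index, ∑ j ∈ ry.index, ∑ l ∈ (a2y j).index,
          F (rx.left i ⊗ₜ[K] ry.left j) *
            (G ((a2x i).left k ⊗ₜ[K] (a2y j).left l) *
              H ((a2x i).right k ⊗ₜ[K] (a2y j).right l)) := (sum4_swap _ _ _ _ _).symm
    _ = ∑ i ∈ rx.index, ∑ j ∈ ry.index, ∑ k ∈ (a2x i).index, ∑ l ∈ (a2y j).index,
          F (rx.left i ⊗ₜ[K] ry.left j) *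
            (G ((a2x i).left k ⊗ₜ[K] (a2y j).left l) *
              H ((a2x i).right k ⊗ₜ[K] (a2y j).right l)) :=
        Finset.sum_congr rfl fun i _ => Finset.sum_comm
    _ = conv2 F (conv2 G H) (x ⊗ₜ[K] y) := by
        rw [conv2_tmul _ _ x y rx ry]
        refine Finset.sum_congr rfl fun i _ => Finset.sum_congr rfl fun j _ => ?_
        rw [conv2_tmul G H _ _ (a2x i) (a2y j), Finset.mul_sum]
        refine Finset.sum_congr rfl fun k _ => ?_
        rw [Finset.mul_sum]


lemma antipode_one : antipode (R := K) (1 : A) = 1 := by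
  have h := HopfAlgebra.mul_antipode_rTensor_comul_apply (R := K) (1 : A)
  rw [Bialgebra.comul_one, Algebra.TensorProduct.one_def] at h
  simpa using h

lemma counit_antipode (x : A) :
    Coalgebra.counit (R := K) (antipode (R := K) x) = Coalgebra.counit (R := K) x := by
  have h := congrArg (Coalgebra.counit (R := K))
    (HopfAlgebra.sum_antipode_mul_eq_smul (R := K) (ℛ K x))
  rw [map_sum] at h
  have h2 : ∀ i ∈ (ℛ K x).index,
      Coalgebra.counit (R := K) (antipode (R := K) ((ℛ K x).left i) * (ℛ K x).right i) =
      Coalgebra.counit (R := K)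
        (antipode (R := K) (Coalgebra.counit (R := K) ((ℛ K x).right i) • (ℛ K x).left i)) := by
    intro i _
    rw [Bialgebra.counit_mul, map_smul, map_smul, smul_eq_mul, mul_comm]
  rw [Finset.sum_congr rfl h2, ← map_sum, ← map_sum, repr_smul_left x (ℛ K x)] at h
  simpa using h

lemma antipode_mul (x y : A) :
    antipode (R := K) (x * y) = antipode (R := K) y * antipode (R := K) x := by
  have heq : (antipode (R := K) (A := A)) ∘ₗ LinearMap.mul' K A =
      LinearMap.mul' K A ∘ₗ TensorProduct.map (antipode (R := K)) (antipode (R := K)) ∘ₗ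
        (TensorProduct.comm K A A).toLinearMap := by
    calc (antipode (R := K) (A := A)) ∘ₗ LinearMap.mul' K A
        = conv2 ((antipode (R := K) (A := A)) ∘ₗ LinearMap.mul' K A) u2 :=
          (conv2_u2_right _).symm
      _ = conv2 ((antipode (R := K) (A := A)) ∘ₗ LinearMap.mul' K A)
            (conv2 (LinearMap.mul' K A)
              (LinearMap.mul' K A ∘ₗ
                TensorProduct.map (antipode (R := K)) (antipode (R := K)) ∘ₗ
                (TensorProduct.comm K A A).toLinearMap)) := by rw [conv2_mul_antipodeFlip]
      _ = conv2 (conv2 ((antipode (R := K) (A := A)) ∘ₗ LinearMap.mul' K A)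
              (LinearMap.mul' K A))
            (LinearMap.mul' K A ∘ₗ
              TensorProduct.map (antipode (R := K)) (antipode (R := K)) ∘ₗ
              (TensorProduct.comm K A A).toLinearMap) := (conv2_assoc _ _ _).symm
      _ = conv2 u2 (LinearMap.mul' K A ∘ₗ
              TensorProduct.map (antipode (R := K)) (antipode (R := K)) ∘ₗ
              (TensorProduct.comm K A A).toLinearMap) := by rw [conv2_antipode_mul]
      _ = _ := conv2_u2_left _
  have := congrArg (fun f : A ⊗[K] A →ₗ[K] A => f (x ⊗ₜ[K] y)) heq
  simpa using this

end FoxAux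

open FoxAux


/-- Given an element `a` of a Hopf algebra `A`, the map
`ρ_a(x,y) = (x - ε(x)1)·a·(y - ε(y)1)` is a Fox pairing (bilinear and
satisfying the two Fox–Leibniz rules).  Moreover, if `s(a) = -a`, where `s` is
the (involutive) antipode, then `ρ_a` is antisymmetric: its transpose
`(x,y) ↦ s(ρ_a(s(y),s(x)))` equals `-ρ_a`. -/
theorem fox_pairing_of_element
    {K A : Type*} [CommRing K] [Ring A] [HopfAlgebra K A]
    (hinv : ∀ b : A,
      HopfAlgebra.antipode (R := K) (HopfAlgebra.antipode (R := K) b) = b)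
    (a : A) (ρ : A → A → A)
    (hρ : ∀ x y : A,
      ρ x y = (x - Coalgebra.counit (R := K) x • (1 : A)) * a *
        (y - Coalgebra.counit (R := K) y • (1 : A))) :
    (∀ x x' y : A, ρ (x + x') y = ρ x y + ρ x' y) ∧
    (∀ (k : K) (x y : A), ρ (k • x) y = k • ρ x y) ∧
    (∀ x y y' : A, ρ x (y + y') = ρ x y + ρ x y') ∧
    (∀ (k : K) (x y : A), ρ x (k • y) = k • ρ x y) ∧
    (∀ x y z : A, ρ x (y * z) = ρ x y * z + Coalgebra.counit (R := K) y • ρ x z) ∧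
    (∀ x y z : A, ρ (x * y) z = Coalgebra.counit (R := K) y • ρ x z + x * ρ y z) ∧
    (HopfAlgebra.antipode (R := K) a = -a →
      ∀ x y : A,
        HopfAlgebra.antipode (R := K)
            (ρ (HopfAlgebra.antipode (R := K) y) (HopfAlgebra.antipode (R := K) x)) =
          - ρ x y) := by
  refine ⟨?_, ?_, ?_, ?_, ?_, ?_, ?_⟩
  · intro x x' y
    simp only [hρ, map_add]
    rw [add_smul]
    noncomm_ring
    simp only [smul_add, neg_smul, one_smul, smul_neg, neg_neg]
    abel
  · intro k x y
    simp only [hρ, map_smul]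
    rw [smul_assoc]
    rw [← smul_sub, smul_mul_assoc, smul_mul_assoc]
  · intro x y y'
    simp only [hρ, map_add]
    rw [add_smul]
    noncomm_ring
  · intro k x y
    simp only [hρ, map_smul]
    rw [smul_assoc, ← smul_sub, mul_smul_comm]
  · intro x y z
    simp only [hρ, Bialgebra.counit_mul]
    have : (y * z - (Coalgebra.counit (R := K) y * Coalgebra.counit (R := K) z) • (1 : A)) =
        (y - Coalgebra.counit (R := K) y • (1 : A)) * z +
          Coalgebra.counit (R := K) y • (z - Coalgebra.counit (R := K) z • (1 : A)) := by
      rw [sub_mul, smul_mul_assoc, one_mul, smul_sub, smul_smul]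
      abel
    rw [this, mul_add, mul_smul_comm, ← mul_assoc]
  · intro x y z
    simp only [hρ, Bialgebra.counit_mul]
    have : (x * y - (Coalgebra.counit (R := K) x * Coalgebra.counit (R := K) y) • (1 : A)) =
        Coalgebra.counit (R := K) y • (x - Coalgebra.counit (R := K) x • (1 : A)) +
          x * (y - Coalgebra.counit (R := K) y • (1 : A)) := by
      rw [mul_sub, mul_smul_comm, mul_one, smul_sub, smul_smul, mul_comm
        (Coalgebra.counit (R := K) y)]
      abel
    rw [this, add_mul, add_mul, smul_mul_assoc, smul_mul_assoc, mul_assoc x, mul_assoc x]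
  · intro ha x y
    have hX : ∀ z : A,
        HopfAlgebra.antipode (R := K) z - Coalgebra.counit (R := K) z • (1 : A) =
          HopfAlgebra.antipode (R := K) (z - Coalgebra.counit (R := K) z • (1 : A)) := by
      intro z
      rw [map_sub, map_smul, FoxAux.antipode_one]
    rw [hρ, hρ, FoxAux.counit_antipode, FoxAux.counit_antipode, hX, hX]
    rw [FoxAux.antipode_mul, FoxAux.antipode_mul, hinv, hinv, ha]
    noncomm_ring
    simp only [smul_add, neg_smul, one_smul, smul_neg, neg_neg, smul_smul]
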